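/- The one-point compactification ℕ† of the discrete space ℕ is e-closed: for every compact metrizable space Y, closed subspace Z ⊆ Y, and sequence of continuous maps φₙ : Z → ℕ† converging uniformly to a continuous map φ, if each φₙ extends to a continuous map Y → ℕ†, then φ extends to a continuous map Y → ℕ†. -/

import Mathlib

open Set Filter Topology
open scoped OnePoint

/-- A map `f : Z → X` on a closed subspace `Z` of `Y` extends to a continuous map on `Y`. -/
def ExtendsTo {X Y : Type*} [TopologicalSpace X] [TopologicalSpace Y]
    (Z : Set Y) (f : C(Z, X)) : Prop :=
  ∃ g : C(Y, X), ∀ z : Z, g z.1 = f z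

/-- The one-point compactification `ℕ†` of discrete `ℕ` is e-closed: a uniform limit (i.e. a
limit in the compact-open topology) of extendible maps into `ℕ†` is extendible. -/
theorem onePoint_nat_eClosed {Y : Type*} [MetricSpace Y] [CompactSpace Y]
    (Z : Set Y) (hZ : IsClosed Z)
    (φ : ℕ → C(Z, OnePoint ℕ)) (φl : C(Z, OnePoint ℕ))
    (hconv : Tendsto φ atTop (𝓝 φl))
    (hext : ∀ n, ExtendsTo Z (φ n)) :
    ExtendsTo Z φl := by
  classical
  have ocase : ∀ x : OnePoint ℕ, x = ∞ ∨ ∃ k : ℕ, x = (k : OnePoint ℕ) := fun x =>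
    Option.casesOn x (Or.inl rfl) fun k => Or.inr ⟨k, rfl⟩
  haveI : CompactSpace Z := isCompact_iff_compactSpace.mp hZ.isCompact
  -- Step 1: for each k, some extendible map agrees with φl exactly on the fiber of k.
  have key : ∀ k : ℕ, ∃ g : C(Y, OnePoint ℕ),
      ∀ z : Z, (g z.1 = (k : OnePoint ℕ) ↔ φl z = (k : OnePoint ℕ)) := by
    intro k
    have hko : IsOpen {(k : OnePoint ℕ)} := by
      rw [← Set.image_singleton, OnePoint.isOpen_image_coe]
      exact isOpen_discrete _
    have hkc : IsClosed {(k : OnePoint ℕ)} := isClosed_singleton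
    have h1 : ∀ᶠ n in atTop,
        MapsTo (φ n) (φl ⁻¹' {(k : OnePoint ℕ)}) {(k : OnePoint ℕ)} :=
      ContinuousMap.tendsto_nhds_compactOpen.mp hconv _
        (hkc.preimage φl.continuous).isCompact _ hko (mapsTo_preimage _ _)
    have h2 : ∀ᶠ n in atTop,
        MapsTo (φ n) (φl ⁻¹' {(k : OnePoint ℕ)}ᶜ) {(k : OnePoint ℕ)}ᶜ :=
      ContinuousMap.tendsto_nhds_compactOpen.mp hconv _
        (hko.isClosed_compl.preimage φl.continuous).isCompact _ hkc.isOpen_compl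
        (mapsTo_preimage _ _)
    obtain ⟨n, hn1, hn2⟩ := (h1.and h2).exists
    obtain ⟨g, hg⟩ := hext n
    refine ⟨g, fun z => ?_⟩
    rw [hg]
    constructor
    · intro h
      by_contra hne
      exact hn2 hne h
    · intro h
      exact hn1 h
  choose g hg using key
  set W : ℕ → Set Y := fun k => (g k) ⁻¹' {(k : OnePoint ℕ)} with hW
  have hWo : ∀ k, IsOpen (W k) := fun k => by
    refine (?_ : IsOpen {(k : OnePoint ℕ)}).preimage (g k).continuous
    rw [← Set.image_singleton, OnePoint.isOpen_image_coe]
    exact isOpen_discrete _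
  have hWc : ∀ k, IsClosed (W k) := fun k =>
    isClosed_singleton.preimage (g k).continuous
  have hWZ : ∀ k (z : Z), z.1 ∈ W k ↔ φl z = (k : OnePoint ℕ) := fun k z => hg k z
  -- Step 2: define the extension
  let h : Y → OnePoint ℕ := fun y =>
    if hy : ∃ k, y ∈ W k then ((Nat.find hy : ℕ) : OnePoint ℕ) else ∞
  set V : ℕ → Set Y := fun k => W k ∩ ⋂ j < k, (W j)ᶜ with hV
  have hVo : ∀ k, IsOpen (V k) := fun k =>
    (hWo k).inter (Set.Finite.isOpen_biInter (Set.finite_Iio k)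
      (fun j _ => (hWc j).isOpen_compl))
  have hVc : ∀ k, IsClosed (V k) := fun k =>
    (hWc k).inter (by
      refine isClosed_biInter fun j _ => (hWo j).isClosed_compl)
  have hhV : ∀ (y : Y) (k : ℕ), h y = (k : OnePoint ℕ) ↔ y ∈ V k := by
    intro y k
    by_cases hy : ∃ k, y ∈ W k
    · simp only [h, dif_pos hy]
      rw [OnePoint.coe_eq_coe, Nat.find_eq_iff]
      simp only [hV, Set.mem_inter_iff, Set.mem_iInter, Set.mem_compl_iff]
    · simp only [h, dif_neg hy]
      constructor
      · intro hc; exact absurd hc (by simp [OnePoint.infty_ne_coe])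
      · intro hc
        exact absurd ⟨k, hc.1⟩ hy
  have hhinf : ∀ y : Y, h y = ∞ ↔ ∀ k, y ∉ V k := by
    intro y
    constructor
    · intro hy k hk
      rw [← hhV y k] at hk
      rw [hy] at hk
      exact OnePoint.infty_ne_coe _ hk
    · intro hy
      by_contra hne
      simp only [h] at hne ⊢
      by_cases hy' : ∃ k, y ∈ W k
      · set k := Nat.find hy' with hk
        refine hy k ?_
        rw [← hhV]
        simp [h, dif_pos hy', hk]
      · simp [h, dif_neg hy'] at hne
  have hcont : Continuous h := by
    rw [continuous_def]
    intro U hU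
    by_cases hinf : ∞ ∈ U
    · -- complement is a finite union of closed V k
      have hfin : {k : ℕ | (k : OnePoint ℕ) ∉ U}.Finite := by
        have := (OnePoint.isOpen_iff_of_mem hinf).mp hU
        have hcpt := this.2
        rw [isCompact_iff_finite] at hcpt
        exact hcpt
      have heq : h ⁻¹' U = (⋃ k ∈ {k : ℕ | (k : OnePoint ℕ) ∉ U}, V k)ᶜ := by
        ext y
        simp only [Set.mem_preimage, Set.mem_compl_iff, Set.mem_iUnion, not_exists,
          Set.mem_setOf_eq]
        constructor
        · intro hyU k hkU hyV
          rw [← hhV y k] at hyV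
          rw [hyV] at hyU
          exact hkU hyU
        · intro hall
          rcases ocase (h y) with hy | ⟨k, hy⟩
          · rw [hy]; exact hinf
          · by_contra hc
            exact hall k (by rwa [hy] at hc) ((hhV y k).mp hy)
      rw [heq]
      exact (hfin.isClosed_biUnion fun k _ => hVc k).isOpen_compl
    · have heq : h ⁻¹' U = ⋃ k ∈ {k : ℕ | (k : OnePoint ℕ) ∈ U}, V k := by
        ext y
        simp only [Set.mem_preimage, Set.mem_iUnion, Set.mem_setOf_eq]
        constructor
        · intro hyU
          rcases ocase (h y) with hy | ⟨k, hy⟩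
          · rw [hy] at hyU; exact absurd hyU hinf
          · exact ⟨k, by rwa [hy] at hyU, (hhV y k).mp hy⟩
        · rintro ⟨k, hkU, hyV⟩
          rw [← hhV y k] at hyV
          rwa [hyV]
      rw [heq]
      exact isOpen_biUnion fun k _ => hVo k
  refine ⟨⟨h, hcont⟩, fun z => ?_⟩
  simp only [ContinuousMap.coe_mk]
  rcases ocase (φl z) with hz | ⟨m, hz⟩
  · rw [hz, hhinf]
    intro k hk
    have : z.1 ∈ W k := hk.1
    rw [hWZ k z, hz] at this
    exact OnePoint.infty_ne_coe _ this
  · rw [hz, hhV]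
    refine ⟨(hWZ m z).mpr hz, ?_⟩
    simp only [Set.mem_iInter, Set.mem_compl_iff]
    intro j hj hzW
    rw [hWZ j z, hz, OnePoint.coe_eq_coe] at hzW
    omega
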